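/- arXiv:2406.07242 — 3 statements merged into one kernel-verified Lean document; each statement's English description precedes it below -/
import Mathlib

section
/- Let H be a Hilbert space, q ∈ H with q ≥ q₀·𝟙 pointwise for some q₀ > 0 (in H = L²(D,μ)), and let Θ := {θ ∈ Δ : ⟨q, θ⟩ = 1} where Δ is a convex cone contained in the nonnegative cone H₊. Suppose a Borel vector measure I on [0,∞) with values in H₊ admits two decompositions dI = θ⁽¹⟩ dν⁽¹⟩ = θ⁽²⟩ dν⁽²⟩ with θ⁽ⁱ⟩ taking values in Θ and ν⁽ⁱ⟩ nonnegative scalar measures. Then ν⁽¹⟩ = ν⁽²⟩ and θ⁽¹⟩ = θ⁽²⟩ up to ν-null sets. -/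
open scoped RealInnerProductSpace
open MeasureTheory

/-- Scalar auxiliary lemma: an integrable real function on a finite measure supported in
`Ioc A B` whose integrals over all `Ioc a b` vanish is a.e. zero. -/
lemma scalar_aux {μ : Measure ℝ} [IsFiniteMeasure μ] {g : ℝ → ℝ} (hg : Integrable g μ)
    (A B : ℝ) (hsupp : μ (Set.Ioc A B)ᶜ = 0)
    (h : ∀ a b : ℝ, a < b → ∫ t in Set.Ioc a b, g t ∂μ = 0) : g =ᵐ[μ] 0 := by
  set P := μ.withDensity (fun t => ENNReal.ofReal (g t)) with hP
  set N := μ.withDensity (fun t => ENNReal.ofReal (-g t)) with hN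
  have habs : ∀ c : ℝ → ℝ, ∫⁻ t, ENNReal.ofReal (c t) ∂μ ≤ ∫⁻ t, (‖g t‖₊ : ENNReal) ∂μ →
      IsFiniteMeasure (μ.withDensity (fun t => ENNReal.ofReal (c t))) := by
    intro c hc
    refine ⟨?_⟩
    rw [withDensity_apply _ MeasurableSet.univ, Measure.restrict_univ]
    exact lt_of_le_of_lt hc hg.2
  have hPfin : IsFiniteMeasure P := by
    refine habs _ (lintegral_mono fun t => ?_)
    rw [← enorm_eq_nnnorm, Real.enorm_eq_ofReal_abs]
    exact ENNReal.ofReal_le_ofReal (le_abs_self _)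
  have hNfin : IsFiniteMeasure N := by
    refine habs _ (lintegral_mono fun t => ?_)
    rw [← enorm_eq_nnnorm, Real.enorm_eq_ofReal_abs]
    exact ENNReal.ofReal_le_ofReal (neg_le_abs _)
  have key : ∀ s : Set ℝ, MeasurableSet s →
      ∫ t in s, g t ∂μ = (P s).toReal - (N s).toReal := by
    intro s hs
    rw [integral_eq_lintegral_pos_part_sub_lintegral_neg_part hg.integrableOn,
      hP, hN, withDensity_apply _ hs, withDensity_apply _ hs]
  have hPN : P = N := by
    have hIoc : ∀ ⦃a b : ℝ⦄, a < b → P (Set.Ioc a b) = N (Set.Ioc a b) := by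
      intro a b hab
      have := key (Set.Ioc a b) measurableSet_Ioc
      rw [h a b hab] at this
      have h1 : (P (Set.Ioc a b)).toReal = (N (Set.Ioc a b)).toReal := by linarith
      exact (ENNReal.toReal_eq_toReal_iff' (measure_ne_top P _) (measure_ne_top N _)).mp h1
    have hA : A < max B (A + 1) := lt_of_lt_of_le (lt_add_one A) (le_max_right _ _)
    have hsub : Set.Ioc A B ⊆ Set.Ioc A (max B (A + 1)) :=
      Set.Ioc_subset_Ioc_right (le_max_left _ _)
    have hsupp' : μ (Set.Ioc A (max B (A + 1)))ᶜ = 0 :=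
      measure_mono_null (Set.compl_subset_compl.mpr hsub) hsupp
    have huniv : P Set.univ = N Set.univ := by
      have hPu : P Set.univ = P (Set.Ioc A (max B (A + 1))) := by
        refine (measure_eq_measure_of_null_diff (Set.subset_univ _) ?_).symm
        rw [← Set.compl_eq_univ_diff]
        exact (withDensity_absolutelyContinuous μ _) hsupp'
      have hNu : N Set.univ = N (Set.Ioc A (max B (A + 1))) := by
        refine (measure_eq_measure_of_null_diff (Set.subset_univ _) ?_).symm
        rw [← Set.compl_eq_univ_diff]
        exact (withDensity_absolutelyContinuous μ _) hsupp'
      rw [hPu, hNu, hIoc hA]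
    exact Measure.ext_of_Ioc_finite P N huniv hIoc
  have key2 : ∀ s : Set ℝ, MeasurableSet s → μ s < ⊤ → ∫ t in s, g t ∂μ = 0 := by
    intro s hs _
    rw [key s hs, hPN, sub_self]
  have := ae_eq_zero_restrict_of_forall_setIntegral_eq_zero_real
    (fun s _ _ => hg.integrableOn) key2 MeasurableSet.univ (measure_ne_top μ _)
  rwa [Measure.restrict_univ] at this

/-- uniqueness of the decomposition `dI = θ dν` with `θ` valued in the set
`Θ = {θ ∈ Δ : ⟪q, θ⟫ = 1}`. -/
theorem stmt2 {H : Type*} [NormedAddCommGroup H] [InnerProductSpace ℝ H] [CompleteSpace H]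
    (q : H) (Δ : Set H) (hΔ : Convex ℝ Δ)
    (hcone : ∀ c : ℝ, 0 ≤ c → ∀ θ ∈ Δ, c • θ ∈ Δ)
    (Θ : Set H) (hΘ : Θ = {θ ∈ Δ | ⟪q, θ⟫ = 1})
    (θ₁ θ₂ : ℝ → H)
    (hθ₁ : ∀ t : ℝ, 0 ≤ t → θ₁ t ∈ Θ) (hθ₂ : ∀ t : ℝ, 0 ≤ t → θ₂ t ∈ Θ)
    (ν₁ ν₂ : Measure ℝ) [IsLocallyFiniteMeasure ν₁] [IsLocallyFiniteMeasure ν₂]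
    (hsupp₁ : ν₁ (Set.Iio 0) = 0) (hsupp₂ : ν₂ (Set.Iio 0) = 0)
    (hint₁ : ∀ a b : ℝ, IntegrableOn θ₁ (Set.Icc a b) ν₁)
    (hint₂ : ∀ a b : ℝ, IntegrableOn θ₂ (Set.Icc a b) ν₂)
    (hdec : ∀ a b : ℝ, 0 ≤ a → a ≤ b →
      ∫ t in Set.Icc a b, θ₁ t ∂ν₁ = ∫ t in Set.Icc a b, θ₂ t ∂ν₂) :
    ν₁ = ν₂ ∧ θ₁ =ᵐ[ν₁] θ₂ := by
  -- the value of ⟪q, θᵢ t⟫ is 1 for t ≥ 0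
  have hq₁ : ∀ t : ℝ, 0 ≤ t → ⟪q, θ₁ t⟫ = 1 := fun t ht => ((hΘ ▸ hθ₁ t ht).2 : _)
  have hq₂ : ∀ t : ℝ, 0 ≤ t → ⟪q, θ₂ t⟫ = 1 := fun t ht => ((hΘ ▸ hθ₂ t ht).2 : _)
  -- Step A: measures of Icc with nonneg endpoints agree
  have hIccval : ∀ (ν : Measure ℝ) [IsLocallyFiniteMeasure ν] (θ : ℝ → H),
      (∀ t : ℝ, 0 ≤ t → ⟪q, θ t⟫ = 1) → ∀ a b : ℝ, 0 ≤ a → IntegrableOn θ (Set.Icc a b) ν →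
      ⟪q, ∫ t in Set.Icc a b, θ t ∂ν⟫ = (ν (Set.Icc a b)).toReal := by
    intro ν _ θ hqθ a b ha hi
    rw [← integral_inner hi q]
    have : ∫ t in Set.Icc a b, ⟪q, θ t⟫ ∂ν = ∫ t in Set.Icc a b, (1 : ℝ) ∂ν :=
      setIntegral_congr_fun measurableSet_Icc (fun t ht => hqθ t (le_trans ha ht.1))
    rw [this, setIntegral_const, smul_eq_mul, mul_one]
    rfl
  have hA1 : ∀ a b : ℝ, 0 ≤ a → ν₁ (Set.Icc a b) = ν₂ (Set.Icc a b) := by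
    intro a b ha
    rcases le_or_gt a b with hab | hab
    · have h1 := hIccval ν₁ θ₁ hq₁ a b ha (hint₁ a b)
      have h2 := hIccval ν₂ θ₂ hq₂ a b ha (hint₂ a b)
      rw [hdec a b ha hab, h2] at h1
      exact (ENNReal.toReal_eq_toReal_iff' measure_Icc_lt_top.ne measure_Icc_lt_top.ne).mp h1.symm
    · rw [Set.Icc_eq_empty (not_le.mpr hab)]; simp
  -- extend to all Icc
  have hA2 : ∀ a b : ℝ, ν₁ (Set.Icc a b) = ν₂ (Set.Icc a b) := by
    intro a b
    rcases le_or_gt 0 a with ha | ha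
    · exact hA1 a b ha
    · rcases lt_or_ge b 0 with hb | hb
      · have h1 : ν₁ (Set.Icc a b) = 0 :=
          measure_mono_null (fun x hx => lt_of_le_of_lt hx.2 hb) hsupp₁
        have h2 : ν₂ (Set.Icc a b) = 0 :=
          measure_mono_null (fun x hx => lt_of_le_of_lt hx.2 hb) hsupp₂
        rw [h1, h2]
      · have heq : ∀ (ν : Measure ℝ), ν (Set.Iio 0) = 0 →
            ν (Set.Icc a b) = ν (Set.Icc 0 b) := by
          intro ν hs
          refine le_antisymm ?_ (measure_mono (Set.Icc_subset_Icc_left ha.le))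
          calc ν (Set.Icc a b) ≤ ν (Set.Iio 0 ∪ Set.Icc 0 b) := by
                refine measure_mono fun x hx => ?_
                rcases lt_or_ge x 0 with h | h
                · exact Or.inl h
                · exact Or.inr ⟨h, hx.2⟩
            _ ≤ ν (Set.Iio 0) + ν (Set.Icc 0 b) := measure_union_le _ _
            _ = ν (Set.Icc 0 b) := by rw [hs, zero_add]
        rw [heq ν₁ hsupp₁, heq ν₂ hsupp₂, hA1 0 b le_rfl]
  -- measures agree on Ioc, hence are equal
  have hν : ν₁ = ν₂ := by
    refine Measure.ext_of_Ioc ν₁ ν₂ fun a b hab => ?_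
    have hd : ∀ (ν : Measure ℝ) [IsLocallyFiniteMeasure ν],
        ν (Set.Ioc a b) = ν (Set.Icc a b) - ν (Set.Icc a a) := by
      intro ν _
      have hsub : {a} ⊆ Set.Icc a b := by simp [hab.le]
      have hfin : ν {a} ≠ ⊤ := (lt_of_le_of_lt (measure_mono hsub) measure_Icc_lt_top).ne
      rw [← Set.Icc_diff_left,
        measure_diff hsub (measurableSet_singleton a).nullMeasurableSet hfin, Set.Icc_self]
    rw [hd ν₁, hd ν₂, hA2 a b, hA2 a a]
  subst hν
  refine ⟨rfl, ?_⟩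
  set ν := ν₁
  -- integrals over all Icc agree
  have hIcc : ∀ a b : ℝ, ∫ t in Set.Icc a b, θ₁ t ∂ν = ∫ t in Set.Icc a b, θ₂ t ∂ν := by
    intro a b
    rcases le_or_gt 0 a with ha | ha
    · rcases le_or_gt a b with hab | hab
      · exact hdec a b ha hab
      · rw [Set.Icc_eq_empty (not_le.mpr hab)]; simp
    · rcases lt_or_ge b 0 with hb | hb
      · have hnull : ν (Set.Icc a b) = 0 :=
          measure_mono_null (fun x hx => lt_of_le_of_lt hx.2 hb) hsupp₁
        have h0 : ν.restrict (Set.Icc a b) = 0 := Measure.restrict_eq_zero.mpr hnull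
        rw [h0]
        simp
      · have hae : Set.Icc a b =ᵐ[ν] Set.Icc 0 b := by
          refine (Filter.eventuallyEq_set.mpr ?_)
          have : ∀ᵐ x ∂ν, ¬ x < 0 := by
            rw [ae_iff]; simp only [not_not]; exact hsupp₁
          filter_upwards [this] with x hx
          simp only [Set.mem_Icc]
          constructor
          · rintro ⟨_, h2⟩; exact ⟨not_lt.mp hx, h2⟩
          · rintro ⟨h1, h2⟩; exact ⟨le_trans ha.le h1, h2⟩
        rw [setIntegral_congr_set hae, setIntegral_congr_set hae, hdec 0 b le_rfl hb]
  -- integrals over all Ioc agree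
  have hIoc : ∀ a b : ℝ, ∫ t in Set.Ioc a b, θ₁ t ∂ν = ∫ t in Set.Ioc a b, θ₂ t ∂ν := by
    intro a b
    rcases le_or_gt a b with hab | hab
    · have hsplit : ∀ (θ : ℝ → H), (∀ a' b' : ℝ, IntegrableOn θ (Set.Icc a' b') ν) →
          ∫ t in Set.Icc a b, θ t ∂ν
            = ∫ t in Set.Icc a a, θ t ∂ν + ∫ t in Set.Ioc a b, θ t ∂ν := by
        intro θ hi
        rw [← setIntegral_union]
        · rw [Set.Icc_self, Set.union_comm, ← Set.Icc_diff_left, Set.diff_union_self,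
            Set.union_eq_self_of_subset_right (by simp [hab])]
        · rw [Set.Icc_self]
          simp [Set.disjoint_left]
        · exact measurableSet_Ioc
        · exact (hi a a).mono_set (by simp [hab])
        · exact (hi a b).mono_set (by rw [← Set.Icc_diff_left]; exact Set.diff_subset)
      have h1 := hsplit θ₁ hint₁
      have h2 := hsplit θ₂ hint₂
      rw [hIcc a b, hIcc a a, h2] at h1
      exact (add_right_injective _ h1.symm)
    · rw [Set.Ioc_eq_empty (not_lt.mpr hab.le)]; simp
  -- a.e. equality on each restricted piece via duality
  have hpiece : ∀ n : ℕ, (fun t => θ₁ t - θ₂ t) =ᵐ[ν.restrict (Set.Ioc (-1 : ℝ) n)] 0 := by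
    intro n
    set μ := ν.restrict (Set.Ioc (-1 : ℝ) n) with hμ
    haveI : IsFiniteMeasure μ := ⟨by
      rw [hμ, Measure.restrict_apply_univ]; exact measure_Ioc_lt_top⟩
    have hi₁ : Integrable θ₁ μ :=
      (hint₁ (-1) n).mono_set Set.Ioc_subset_Icc_self
    have hi₂ : Integrable θ₂ μ :=
      (hint₂ (-1) n).mono_set Set.Ioc_subset_Icc_self
    have hf : Integrable (fun t => θ₁ t - θ₂ t) μ := hi₁.sub hi₂
    rcases hf.aestronglyMeasurable.isSeparable_ae_range with ⟨u, hu_sep, hu⟩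
    refine ae_eq_zero_of_forall_dual_of_isSeparable ℝ hu_sep (fun c => ?_) hu
    refine scalar_aux (c.integrable_comp hf) (-1) n
      (by rw [hμ, Measure.restrict_apply' measurableSet_Ioc]; simp) (fun a b hab => ?_)
    have hIocμ : ∀ (θ : ℝ → H), (∀ a' b' : ℝ, IntegrableOn θ (Set.Icc a' b') ν) →
        ∫ t in Set.Ioc a b, θ t ∂μ
          = ∫ t in Set.Ioc (max a (-1)) (min b n), θ t ∂ν := by
      intro θ hi
      rw [hμ, Measure.restrict_restrict measurableSet_Ioc, Set.Ioc_inter_Ioc]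
    have hintc : IntegrableOn (fun t => θ₁ t - θ₂ t) (Set.Ioc a b) μ := hf.integrableOn
    rw [ContinuousLinearMap.integral_comp_comm c hintc,
      integral_sub hi₁.integrableOn hi₂.integrableOn]
    rw [hIocμ θ₁ hint₁, hIocμ θ₂ hint₂, hIoc (max a (-1)) (min b n), sub_self, map_zero]
  -- combine the pieces
  have hset : ν {t | θ₁ t ≠ θ₂ t} = 0 := by
    have hcover : {t | θ₁ t ≠ θ₂ t} ⊆
        Set.Iio 0 ∪ ⋃ n : ℕ, ({t | θ₁ t ≠ θ₂ t} ∩ Set.Ioc (-1 : ℝ) n) := by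
      intro t ht
      rcases lt_or_ge t 0 with h | h
      · exact Or.inl h
      · obtain ⟨n, hn⟩ := exists_nat_ge t
        exact Or.inr (Set.mem_iUnion.mpr ⟨n, ht, lt_of_lt_of_le (by norm_num) h, hn⟩)
    refine measure_mono_null hcover (measure_union_null hsupp₁ (measure_iUnion_null fun n => ?_))
    have := hpiece n
    rw [Filter.EventuallyEq, ae_iff] at this
    rw [Measure.restrict_apply' measurableSet_Ioc] at this
    refine le_antisymm (le_trans (measure_mono fun t ht => ?_) this.le) (zero_le')
    refine ⟨fun h0 => ht.1 (sub_eq_zero.mp ?_), ht.2⟩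
    simpa using h0
  exact ae_iff.mpr (by simpa using hset)
end

section
/- Under Assumptions: A self-adjoint dissipative with ⟨Ax,x⟩ ≤ -δ|x|², G semiconcave with constant c₁ (linear modulus), and the mild solution map (x,I) ↦ X^{x,I} affine with X_t^{x,I} - X_t^{y,I} = e^{tA}(x-y). Then the value function V(x) = inf_I E[∫₀^∞ e^{-ρt}(G(X_t^{x,I})dt + ⟨q,dI_t⟩)] is semiconcave with constant c₁/(ρ + 2δ); i.e. λV(x)+(1-λ)V(y)-V(λx+(1-λ)y) ≤ (c₁/(2(ρ+2δ)))λ(1-λ)|x-y|² for all x,y ∈ H, λ ∈ [0,1]. -/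
open MeasureTheory

lemma aux_exp_integral (a : ℝ) (ha : 0 < a) :
    ∫ t in Set.Ioi (0 : ℝ), Real.exp (-a * t) = 1 / a := by
  have h := integral_Ioi_of_hasDerivAt_of_tendsto
    (f := fun t : ℝ => -Real.exp (-a * t) / a)
    (f' := fun t : ℝ => Real.exp (-a * t)) (a := 0) (m := 0)
    ?_ ?_ (exp_neg_integrableOn_Ioi 0 ha) ?_
  · rw [h]; simp [div_eq_mul_inv]
  · exact (by continuity : Continuous fun t : ℝ => -Real.exp (-a * t) / a).continuousWithinAt
  · intro t _
    have h1 : HasDerivAt (fun t : ℝ => -a * t) (-a) t := by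
      simpa using (hasDerivAt_id t).const_mul (-a)
    have h2 := (h1.exp.neg).div_const a
    refine h2.congr_deriv ?_
    rw [div_eq_iff ha.ne']
    ring
  · have : Filter.Tendsto (fun t : ℝ => Real.exp (-a * t)) Filter.atTop (nhds 0) := by
      simpa using Real.tendsto_exp_comp_nhds_zero.2
        (Filter.Tendsto.const_mul_atTop_of_neg (neg_neg_iff_pos.2 ha) Filter.tendsto_id)
    simpa using (this.neg.div_const a)

/-- semiconcavity of the value function with constant `c₁/(ρ + 2δ)`, inherited
from the semiconcavity of the running cost `G` via the contraction `‖X^x - X^y‖ ≤ e^{-δt}‖x-y‖`. -/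
theorem stmt5 {H M Ω : Type*} [NormedAddCommGroup H] [InnerProductSpace ℝ H]
    [AddCommGroup M] [Module ℝ M] [MeasurableSpace Ω]
    (P : Measure Ω) [IsProbabilityMeasure P]
    (ρ δ c₁ : ℝ) (hρ : 0 < ρ) (hδ : 0 < δ) (hc₁ : 0 < c₁)
    (G : H → ℝ)
    (hG : ∀ x y : H, ∀ l ∈ Set.Icc (0 : ℝ) 1,
      l * G x + (1 - l) * G y - G (l • x + (1 - l) • y) ≤
        c₁ / 2 * (l * (1 - l)) * ‖x - y‖ ^ 2)
    (X : H → M → ℝ → Ω → H)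
    (haff : ∀ (x y : H) (I : M) (t : ℝ) (ω : Ω) (l : ℝ),
      X (l • x + (1 - l) • y) I t ω = l • X x I t ω + (1 - l) • X y I t ω)
    (hcontr : ∀ (x y : H) (I : M) (t : ℝ), 0 ≤ t → ∀ ω : Ω,
      ‖X x I t ω - X y I t ω‖ ≤ Real.exp (-δ * t) * ‖x - y‖)
    (cost : M → ℝ)
    (J : H → M → ℝ)
    (hJ : ∀ x I, J x I =
      (∫ ω, (∫ t in Set.Ioi (0 : ℝ), Real.exp (-ρ * t) * G (X x I t ω)) ∂P) + cost I)
    (hint₁ : ∀ x I ω, IntegrableOn (fun t => Real.exp (-ρ * t) * G (X x I t ω)) (Set.Ioi 0))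
    (hint₂ : ∀ x I, Integrable
      (fun ω => ∫ t in Set.Ioi (0 : ℝ), Real.exp (-ρ * t) * G (X x I t ω)) P)
    (S : Set M) (hSne : S.Nonempty)
    (hbdd : ∀ x, BddBelow ((fun I => J x I) '' S))
    (V : H → ℝ) (hV : ∀ x, V x = sInf ((fun I => J x I) '' S)) :
    ∀ x y : H, ∀ l ∈ Set.Icc (0 : ℝ) 1,
      l * V x + (1 - l) * V y - V (l • x + (1 - l) • y) ≤
        c₁ / (2 * (ρ + 2 * δ)) * (l * (1 - l)) * ‖x - y‖ ^ 2 := by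
  intro x y l hl
  obtain ⟨hl0, hl1⟩ := hl
  have hl1' : (0 : ℝ) ≤ 1 - l := by linarith
  set z : H := l • x + (1 - l) • y with hz
  set K : ℝ := c₁ / (2 * (ρ + 2 * δ)) * (l * (1 - l)) * ‖x - y‖ ^ 2 with hK
  have ha : (0 : ℝ) < ρ + 2 * δ := by linarith
  -- key estimate for each control I
  have key : ∀ I : M, l * J x I + (1 - l) * J y I - J z I ≤ K := by
    intro I
    -- inner (time) integral estimate, for each ω
    have hin : ∀ ω : Ω,
        l * (∫ t in Set.Ioi (0 : ℝ), Real.exp (-ρ * t) * G (X x I t ω))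
        + (1 - l) * (∫ t in Set.Ioi (0 : ℝ), Real.exp (-ρ * t) * G (X y I t ω))
        - (∫ t in Set.Ioi (0 : ℝ), Real.exp (-ρ * t) * G (X z I t ω)) ≤ K := by
      intro ω
      have hfx := hint₁ x I ω
      have hfy := hint₁ y I ω
      have hfz := hint₁ z I ω
      have hlhsint : IntegrableOn (fun t =>
          l * (Real.exp (-ρ * t) * G (X x I t ω))
          + (1 - l) * (Real.exp (-ρ * t) * G (X y I t ω))
          - Real.exp (-ρ * t) * G (X z I t ω)) (Set.Ioi 0) :=
        ((hfx.const_mul l).add (hfy.const_mul (1 - l))).sub hfz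
      have hrhsint : IntegrableOn (fun t =>
          c₁ / 2 * (l * (1 - l)) * ‖x - y‖ ^ 2 * Real.exp (-(ρ + 2 * δ) * t))
          (Set.Ioi 0) := (exp_neg_integrableOn_Ioi 0 ha).const_mul _
      have hmono : ∀ t ∈ Set.Ioi (0 : ℝ),
          l * (Real.exp (-ρ * t) * G (X x I t ω))
          + (1 - l) * (Real.exp (-ρ * t) * G (X y I t ω))
          - Real.exp (-ρ * t) * G (X z I t ω)
          ≤ c₁ / 2 * (l * (1 - l)) * ‖x - y‖ ^ 2 * Real.exp (-(ρ + 2 * δ) * t) := by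
        intro t ht
        have ht0 : (0 : ℝ) ≤ t := le_of_lt ht
        have hexpρ : (0 : ℝ) < Real.exp (-ρ * t) := Real.exp_pos _
        have hGb := hG (X x I t ω) (X y I t ω) l ⟨hl0, hl1⟩
        have hzX : X z I t ω = l • X x I t ω + (1 - l) • X y I t ω := haff x y I t ω l
        have hcb := hcontr x y I t ht0 ω
        have hsq : ‖X x I t ω - X y I t ω‖ ^ 2 ≤ (Real.exp (-δ * t) * ‖x - y‖) ^ 2 := by
          have := pow_le_pow_left₀ (norm_nonneg _) hcb 2
          exact this
        have hstep : l * G (X x I t ω) + (1 - l) * G (X y I t ω) - G (X z I t ω)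
            ≤ c₁ / 2 * (l * (1 - l)) * (Real.exp (-δ * t) * ‖x - y‖) ^ 2 := by
          rw [hzX]
          refine hGb.trans ?_
          have hcoef : (0 : ℝ) ≤ c₁ / 2 * (l * (1 - l)) := by positivity
          exact mul_le_mul_of_nonneg_left hsq hcoef
        have := mul_le_mul_of_nonneg_left hstep (le_of_lt hexpρ)
        calc l * (Real.exp (-ρ * t) * G (X x I t ω))
              + (1 - l) * (Real.exp (-ρ * t) * G (X y I t ω))
              - Real.exp (-ρ * t) * G (X z I t ω)
            = Real.exp (-ρ * t) *
              (l * G (X x I t ω) + (1 - l) * G (X y I t ω) - G (X z I t ω)) := by ring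
          _ ≤ Real.exp (-ρ * t) *
              (c₁ / 2 * (l * (1 - l)) * (Real.exp (-δ * t) * ‖x - y‖) ^ 2) := this
          _ = c₁ / 2 * (l * (1 - l)) * ‖x - y‖ ^ 2 * Real.exp (-(ρ + 2 * δ) * t) := by
              rw [mul_pow, sq, show Real.exp (-(ρ + 2 * δ) * t)
                = Real.exp (-ρ * t) * (Real.exp (-δ * t) * Real.exp (-δ * t)) by
                  rw [← Real.exp_add, ← Real.exp_add]; congr 1; ring]
              ring
      have hcmp := setIntegral_mono_on hlhsint hrhsint measurableSet_Ioi hmono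
      have hlin : (∫ t in Set.Ioi (0 : ℝ),
          (l * (Real.exp (-ρ * t) * G (X x I t ω))
          + (1 - l) * (Real.exp (-ρ * t) * G (X y I t ω))
          - Real.exp (-ρ * t) * G (X z I t ω)))
          = l * (∫ t in Set.Ioi (0 : ℝ), Real.exp (-ρ * t) * G (X x I t ω))
          + (1 - l) * (∫ t in Set.Ioi (0 : ℝ), Real.exp (-ρ * t) * G (X y I t ω))
          - (∫ t in Set.Ioi (0 : ℝ), Real.exp (-ρ * t) * G (X z I t ω)) := by
        have hadd : IntegrableOn (fun t =>
            l * (Real.exp (-ρ * t) * G (X x I t ω))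
            + (1 - l) * (Real.exp (-ρ * t) * G (X y I t ω))) (Set.Ioi 0) :=
          (hfx.const_mul l).add (hfy.const_mul (1 - l))
        rw [integral_sub hadd hfz,
          integral_add (hfx.const_mul l) (hfy.const_mul (1 - l)),
          integral_const_mul, integral_const_mul]
      have hrval : (∫ t in Set.Ioi (0 : ℝ),
          c₁ / 2 * (l * (1 - l)) * ‖x - y‖ ^ 2 * Real.exp (-(ρ + 2 * δ) * t)) = K := by
        rw [integral_const_mul, aux_exp_integral _ ha, hK]
        field_simp
      rw [hlin, hrval] at hcmp
      exact hcmp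
    -- outer (ω) integral estimate
    have houter :
        l * (∫ ω, (∫ t in Set.Ioi (0 : ℝ), Real.exp (-ρ * t) * G (X x I t ω)) ∂P)
        + (1 - l) * (∫ ω, (∫ t in Set.Ioi (0 : ℝ), Real.exp (-ρ * t) * G (X y I t ω)) ∂P)
        - (∫ ω, (∫ t in Set.Ioi (0 : ℝ), Real.exp (-ρ * t) * G (X z I t ω)) ∂P) ≤ K := by
      have hgx := hint₂ x I
      have hgy := hint₂ y I
      have hgz := hint₂ z I
      have hadd : Integrable (fun ω =>
          l * (∫ t in Set.Ioi (0 : ℝ), Real.exp (-ρ * t) * G (X x I t ω))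
          + (1 - l) * (∫ t in Set.Ioi (0 : ℝ), Real.exp (-ρ * t) * G (X y I t ω))) P :=
        (hgx.const_mul l).add (hgy.const_mul (1 - l))
      have hcmp := integral_mono (hadd.sub hgz) (integrable_const K) hin
      simp only [Pi.sub_apply] at hcmp
      rw [integral_sub hadd hgz,
        integral_add (hgx.const_mul l) (hgy.const_mul (1 - l)),
        integral_const_mul, integral_const_mul, integral_const] at hcmp
      simpa using hcmp
    calc l * J x I + (1 - l) * J y I - J z I
        = l * (∫ ω, (∫ t in Set.Ioi (0 : ℝ), Real.exp (-ρ * t) * G (X x I t ω)) ∂P)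
        + (1 - l) * (∫ ω, (∫ t in Set.Ioi (0 : ℝ), Real.exp (-ρ * t) * G (X y I t ω)) ∂P)
        - (∫ ω, (∫ t in Set.Ioi (0 : ℝ), Real.exp (-ρ * t) * G (X z I t ω)) ∂P) := by
          rw [hJ x I, hJ y I, hJ z I]; ring
      _ ≤ K := houter
  -- pass to the infimum
  have hVz : l * V x + (1 - l) * V y - K ≤ V z := by
    rw [hV z]
    refine le_csInf (hSne.image _) ?_
    rintro b ⟨I, hI, rfl⟩
    have hVx : V x ≤ J x I := by
      rw [hV x]; exact csInf_le (hbdd x) ⟨I, hI, rfl⟩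
    have hVy : V y ≤ J y I := by
      rw [hV y]; exact csInf_le (hbdd y) ⟨I, hI, rfl⟩
    have h1 : l * V x ≤ l * J x I := mul_le_mul_of_nonneg_left hVx hl0
    have h2 : (1 - l) * V y ≤ (1 - l) * J y I := mul_le_mul_of_nonneg_left hVy hl1'
    have := key I
    simp only
    linarith
  linarith
end

section
/- Let H be a Hilbert space, A : D(A) ⊆ H → H a self-adjoint densely defined operator with bounded inverse, and let |x|₋₁ := |A⁻¹x|. Let U : H → ℝ be convex and continuous with respect to |·|₋₁. Then every subgradient p ∈ ∂U(x) (w.r.t. the H inner product) belongs to D(A) = D(A*). -/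
open scoped RealInnerProductSpace

/-- if `U` is convex and continuous with respect to `|x|₋₁ = ‖A⁻¹ x‖`, then
every subgradient of `U` belongs to `D(A)` (self-adjointness of `A` being encoded by
symmetry together with `D(A*) ⊆ D(A)`). -/
theorem stmt14 {H : Type*} [NormedAddCommGroup H] [InnerProductSpace ℝ H] [CompleteSpace H]
    (A : H →ₗ.[ℝ] H) (hdense : Dense (A.domain : Set H))
    (hsym : ∀ x y : A.domain, ⟪A x, (y : H)⟫ = ⟪(x : H), A y⟫)
    (hmax : ∀ p : H, (∃ w : H, ∀ x : A.domain, ⟪p, A x⟫ = ⟪w, (x : H)⟫) → p ∈ A.domain)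
    (B : H →L[ℝ] H)
    (hBA : ∀ x : A.domain, B (A x) = (x : H))
    (hAB : ∀ y : H, ∃ h : B y ∈ A.domain, A ⟨B y, h⟩ = y)
    (U : H → ℝ) (hconv : ConvexOn ℝ Set.univ U)
    (hcont : ∀ x : H, ∀ ε : ℝ, 0 < ε → ∃ d : ℝ, 0 < d ∧
      ∀ y : H, ‖B (y - x)‖ < d → |U y - U x| < ε) :
    ∀ x p : H, (∀ y : H, ⟪p, y - x⟫ ≤ U y - U x) → p ∈ A.domain := by
  intro x p hsub
  obtain ⟨d, hd, hball⟩ := hcont x 1 one_pos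
  -- the linear functional h ↦ ⟪p, A h⟫ on A.domain
  set φ : A.domain →ₗ[ℝ] ℝ := (innerSL ℝ p : H →L[ℝ] ℝ).toLinearMap.comp A.toFun with hφ
  have hφ_apply : ∀ h : A.domain, φ h = ⟪p, A h⟫ := fun h => rfl
  -- bound: |⟪p, A h⟫| ≤ (2/d) ‖h‖
  have key : ∀ (h : A.domain) (t : ℝ), |t| * ‖(h : H)‖ < d → t * ⟪p, A h⟫ < 1 := by
    intro h t ht
    have hz : ‖B ((x + t • A h) - x)‖ < d := by
      have e : (x + t • (A h : H)) - x = t • (A h : H) := by abel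
      rw [e, map_smul, hBA h]
      simpa [norm_smul] using ht
    have h1 : |U (x + t • A h) - U x| < 1 := hball _ hz
    have h2 : ⟪p, (x + t • A h) - x⟫ ≤ U (x + t • A h) - U x := hsub _
    have h3 : ⟪p, (x + t • A h) - x⟫ = t * ⟪p, A h⟫ := by
      rw [add_sub_cancel_left, real_inner_smul_right]
    linarith [abs_lt.mp h1]
  have hbound : ∀ h : A.domain, ‖φ h‖ ≤ (2 / d) * ‖h‖ := by
    intro h
    have hcoe : ‖h‖ = ‖(h : H)‖ := rfl
    rcases eq_or_ne (‖(h : H)‖) 0 with h0 | h0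
    · have hz : (h : H) = 0 := norm_eq_zero.mp h0
      have hA0 : A h = 0 := by
        have : h = (0 : A.domain) := Subtype.ext hz
        rw [this, LinearPMap.map_zero]
      rw [hφ_apply, hA0, inner_zero_right]
      simp only [norm_zero]
      positivity
    · have hn : 0 < ‖(h : H)‖ := lt_of_le_of_ne (norm_nonneg _) (Ne.symm h0)
      set n := ‖(h : H)‖ with hnn
      set I : ℝ := ⟪p, A h⟫ with hI
      have ht : ∀ t : ℝ, |t| = d / (2 * n) → t * I < 1 := by
        intro t htabs
        apply key
        rw [htabs, div_mul_eq_mul_div, div_lt_iff₀ (by positivity)]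
        nlinarith
      have h1 := ht (d / (2 * n)) (abs_of_pos (by positivity))
      have h2 := ht (-(d / (2 * n))) (by rw [abs_neg]; exact abs_of_pos (by positivity))
      have e1 : d / (2 * n) * I * (2 * n) = I * d := by
        field_simp
      have e2 : -(d / (2 * n)) * I * (2 * n) = -(I * d) := by
        field_simp
      have h1' : I * d < 2 * n := by
        have := mul_lt_mul_of_pos_right h1 (by positivity : (0:ℝ) < 2 * n)
        rw [e1, one_mul] at this
        exact this
      have h2' : -(I * d) < 2 * n := by
        have := mul_lt_mul_of_pos_right h2 (by positivity : (0:ℝ) < 2 * n)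
        rw [e2, one_mul] at this
        exact this
      rw [hφ_apply, ← hI, Real.norm_eq_abs, abs_le]
      have hgoal : 2 / d * n = 2 * n / d := by ring
      rw [hcoe, hgoal]
      constructor
      · rw [neg_le, le_div_iff₀ hd]
        linarith
      · rw [le_div_iff₀ hd]
        linarith
  -- make continuous, extend to H
  set f : A.domain →L[ℝ] ℝ := φ.mkContinuous (2 / d) hbound with hf
  have hu : IsUniformInducing ((A.domain).subtypeL : A.domain →L[ℝ] H) :=
    isometry_subtype_coe.isUniformInducing
  have hdr : DenseRange ((A.domain).subtypeL : A.domain →L[ℝ] H) := by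
    simpa [Submodule.coe_subtypeL', DenseRange, Set.range] using hdense.denseRange_val
  set g : H →L[ℝ] ℝ := f.extend (A.domain).subtypeL with hg
  have hgf : ∀ h : A.domain, g (h : H) = ⟪p, A h⟫ := by
    intro h
    have := ContinuousLinearMap.extend_eq f hdr hu h
    rw [hg]
    exact this.trans (hφ_apply h)
  obtain ⟨w, hw⟩ := (InnerProductSpace.toDual ℝ H).surjective g
  apply hmax
  refine ⟨w, fun h => ?_⟩
  rw [← hgf h, ← hw]
  simp [InnerProductSpace.toDual_apply_apply]
end
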